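/- The number of sequences (v_1,...,v_{2m}) ∈ {−1,+1}^{2m} such that the corresponding particles (all moving, with particle i at position i, velocity v_i, annihilating pairwise upon collision) mutually annihilate completely is the Catalan number C_m. -/

import Mathlib

open List DyckStep

def Good (l : List ℤ) : Prop :=
  (∀ x ∈ l, x = 1 ∨ x = -1) ∧ l.count 1 = l.count (-1) ∧
    ∀ i, (l.take i).count (-1) ≤ (l.take i).count 1

lemma cnt_low (l₁ l₂ : List ℤ) (i : ℕ) (hi : i ≤ l₁.length) (x : ℤ) :
    ((l₁ ++ (1:ℤ) :: (-1:ℤ) :: l₂).take i).count x = ((l₁ ++ l₂).take i).count x := by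
  rw [take_append_of_le_length hi, take_append_of_le_length hi]

lemma cnt_mid (l₁ l₂ : List ℤ) (x : ℤ) :
    ((l₁ ++ (1:ℤ) :: (-1:ℤ) :: l₂).take (l₁.length + 1)).count x
      = l₁.count x + if x = 1 then 1 else 0 := by
  rw [take_append, take_of_length_le (by omega)]
  simp only [Nat.add_sub_cancel_left, take_succ_cons, take_zero, count_append, count_cons,
    count_nil]
  simp only [beq_iff_eq]
  split_ifs <;> omega

lemma cnt_high (l₁ l₂ : List ℤ) (k : ℕ) (x : ℤ) :
    ((l₁ ++ (1:ℤ) :: (-1:ℤ) :: l₂).take (l₁.length + (k + 2))).count x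
      = ((l₁ ++ l₂).take (l₁.length + k)).count x
        + (if x = 1 then 1 else 0) + (if x = -1 then 1 else 0) := by
  simp only [take_append]
  rw [take_of_length_le (show l₁.length ≤ l₁.length + (k+2) by omega),
    take_of_length_le (show l₁.length ≤ l₁.length + k by omega)]
  simp only [Nat.add_sub_cancel_left, take_succ_cons, count_append, count_cons]
  simp only [beq_iff_eq]
  split_ifs <;> omega

lemma count_full (l₁ l₂ : List ℤ) (x : ℤ) :
    (l₁ ++ (1:ℤ) :: (-1:ℤ) :: l₂).count x
      = (l₁ ++ l₂).count x + (if x = 1 then 1 else 0) + (if x = -1 then 1 else 0) := by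
  simp only [count_append, count_cons, beq_iff_eq]
  split_ifs <;> omega

/-- A configuration of velocities (read left to right) annihilates completely iff it
can be reduced to the empty configuration by repeatedly removing an adjacent pair
consisting of a right-moving particle (`1`) immediately followed by a left-moving
particle (`-1`): such a pair is always the first to collide on its interval. -/
inductive Annihilates : List ℤ → Prop
  | nil : Annihilates []
  | step (l₁ l₂ : List ℤ) : Annihilates (l₁ ++ l₂) →
      Annihilates (l₁ ++ (1 : ℤ) :: (-1 : ℤ) :: l₂)

lemma good_of_annihilates {l : List ℤ} (h : Annihilates l) : Good l := by
  induction h with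
  | nil => exact ⟨by simp, by simp, by simp⟩
  | step l₁ l₂ _ ih =>
    obtain ⟨hmem, hcnt, hpre⟩ := ih
    refine ⟨?_, ?_, ?_⟩
    · intro x hx
      simp only [mem_append, mem_cons] at hx
      rcases hx with h1 | h1 | h1 | h1
      · exact hmem x (by simp [h1])
      · exact Or.inl h1
      · exact Or.inr h1
      · exact hmem x (by simp [h1])
    · rw [count_full, count_full]
      simp only [if_pos rfl, if_neg (by decide : ¬(1:ℤ) = -1), if_neg (by decide : ¬(-1:ℤ) = 1)]
      omega
    · intro i
      rcases le_or_gt i l₁.length with hi | hi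
      · rw [cnt_low _ _ _ hi, cnt_low _ _ _ hi]; exact hpre i
      · rcases eq_or_lt_of_le (Nat.succ_le_of_lt hi) with hi2 | hi2
        · rw [← hi2, cnt_mid, cnt_mid]
          have := hpre l₁.length
          rw [take_append_of_le_length le_rfl, take_length] at this
          simp; omega
        · obtain ⟨k, rfl⟩ : ∃ k, i = l₁.length + (k + 2) :=
            ⟨i - l₁.length - 2, by omega⟩
          rw [cnt_high, cnt_high]
          have := hpre (l₁.length + k)
          simp; omega

lemma good_remove {l₁ l₂ : List ℤ} (h : Good (l₁ ++ (1:ℤ) :: (-1:ℤ) :: l₂)) :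
    Good (l₁ ++ l₂) := by
  obtain ⟨hmem, hcnt, hpre⟩ := h
  refine ⟨?_, ?_, ?_⟩
  · intro x hx
    apply hmem
    simp only [mem_append, mem_cons] at hx ⊢
    tauto
  · rw [count_full, count_full] at hcnt
    simp only [if_pos rfl, if_neg (by decide : ¬(1:ℤ) = -1), if_neg (by decide : ¬(-1:ℤ) = 1)]
      at hcnt
    omega
  · intro i
    rcases le_or_gt i l₁.length with hi | hi
    · have := hpre i
      rwa [cnt_low _ _ _ hi, cnt_low _ _ _ hi] at this
    · obtain ⟨k, hk⟩ : ∃ k, i = l₁.length + k := ⟨i - l₁.length, by omega⟩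
      rcases le_or_gt l₂.length k with hk2 | hk2
      · -- take i (l₁++l₂) = l₁++l₂ in this case; fall back to full-list count
        subst hk
        rw [take_of_length_le (by simp; omega)]
        rw [count_full, count_full] at hcnt
        simp only [if_pos rfl, if_neg (by decide : ¬(1:ℤ) = -1),
          if_neg (by decide : ¬(-1:ℤ) = 1)] at hcnt
        omega
      · subst hk
        have := hpre (l₁.length + (k + 2))
        rw [cnt_high, cnt_high] at this
        simp at this
        omega



lemma annihilates_of_good : ∀ l : List ℤ, Good l → Annihilates l := by
  have key : ∀ n, ∀ l : List ℤ, l.length = n → Good l → Annihilates l := by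
    intro n
    induction n using Nat.strong_induction_on with
    | _ n ih =>
      intro l hlen hg
      rcases eq_or_ne l [] with rfl | hn
      · exact Annihilates.nil
      obtain ⟨hmem, hcnt, hpre⟩ := hg
      have hmem1 : (-1 : ℤ) ∈ l := by
        by_contra hc
        have h0 : l.count (-1) = 0 := count_eq_zero.mpr hc
        have h1 : l.count 1 = l.length := by
          rw [count_eq_length]
          intro x hx
          rcases hmem x hx with h | h
          · simp [h]
          · exact absurd (h ▸ hx) hc
        have : l.length = 0 := by omega
        exact hn (List.length_eq_zero_iff.mp this)
      set j := l.idxOf (-1 : ℤ) with hj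
      have hjlt : j < l.length := idxOf_lt_length_iff.mpr hmem1
      have hgetj : l[j] = -1 := getElem_idxOf hjlt
      have hbefore : ∀ k (hk : k < j), l[k]'(lt_trans hk hjlt) = 1 := by
        intro k hk
        have hne' : l[k]'(lt_trans hk hjlt) ≠ -1 := by
          have := List.not_of_lt_findIdx (p := (· == (-1:ℤ))) (xs := l) hk
          simpa using this
        rcases hmem _ (getElem_mem (lt_trans hk hjlt)) with h | h
        · exact h
        · exact absurd h hne'
      have hj1 : 1 ≤ j := by
        by_contra hc
        push_neg at hc
        interval_cases j
        have h2 := hpre 1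
        have ht : l.take 1 = [(-1 : ℤ)] := by
          rcases l with - | ⟨a, t⟩
          · simp at hn
          · have : a = -1 := by simpa using hgetj
            simp [this]
        rw [ht] at h2
        simp at h2
      -- decompose l
      have hdec : l = l.take (j-1) ++ (1:ℤ) :: (-1:ℤ) :: l.drop (j+1) := by
        have e1 := (l.take_append_drop (j-1)).symm
        have e2 : l.drop (j-1) = l[j-1]'(by omega) :: l.drop (j-1+1) :=
          drop_eq_getElem_cons (by omega)
        have e3 : l.drop j = l[j] :: l.drop (j+1) := drop_eq_getElem_cons hjlt
        rw [show j-1+1 = j by omega] at e2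
        rw [hbefore (j-1) (by omega)] at e2
        rw [hgetj] at e3
        rw [e2, e3] at e1
        exact e1
      have hgood2 : Good (l.take (j-1) ++ l.drop (j+1)) := good_remove (hdec ▸ ⟨hmem, hcnt, hpre⟩)
      have hlen2 : (l.take (j-1) ++ l.drop (j+1)).length = n - 2 := by
        have := congrArg List.length hdec
        simp at this ⊢
        omega
      have hlt : n - 2 < n := by
        have : 0 < l.length := List.length_pos_iff.mpr hn
        omega
      have := Annihilates.step _ _ (ih (n-2) hlt _ hlen2 hgood2)
      rwa [← hdec] at this
  exact fun l => key l.length l rfl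

def toStep (x : ℤ) : DyckStep := if x = 1 then U else D

def toInt : DyckStep → ℤ
  | U => 1
  | D => -1

@[simp] lemma toStep_toInt (s : DyckStep) : toStep (toInt s) = s := by
  cases s <;> simp [toStep, toInt]

lemma toInt_toStep {x : ℤ} (h : x = 1 ∨ x = -1) : toInt (toStep x) = x := by
  rcases h with rfl | rfl <;> simp [toStep, toInt]

lemma count_U_map (l : List ℤ) : (l.map toStep).count U = l.count 1 := by
  induction l with
  | nil => simp
  | cons a t ih =>
    by_cases h : a = 1 <;> simp [toStep, h, count_cons, ih, Ne.symm, eq_comm]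

lemma count_D_map (l : List ℤ) (h : ∀ x ∈ l, x = 1 ∨ x = -1) :
    (l.map toStep).count D = l.count (-1) := by
  induction l with
  | nil => simp
  | cons a t ih =>
    have ha := h a (by simp)
    have ht := fun x hx => h x (mem_cons_of_mem a hx)
    rcases ha with rfl | rfl <;> simp [toStep, count_cons, ih ht]

lemma count_one_map (w : List DyckStep) : (w.map toInt).count 1 = w.count U := by
  induction w with
  | nil => simp
  | cons s t ih => cases s <;> simp [toInt, count_cons, ih]

lemma count_negone_map (w : List DyckStep) : (w.map toInt).count (-1) = w.count D := by
  induction w with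
  | nil => simp
  | cons s t ih => cases s <;> simp [toInt, count_cons, ih]

/-- A `Good` list of integers gives a Dyck word. -/
def Good.toDyck {l : List ℤ} (h : Good l) : DyckWord where
  toList := l.map toStep
  count_U_eq_count_D := by rw [count_U_map, count_D_map l h.1]; exact h.2.1
  count_D_le_count_U i := by
    rw [← map_take, count_U_map, count_D_map _ (fun x hx => h.1 x (mem_of_mem_take hx))]
    exact h.2.2 i

lemma good_map_toInt (p : DyckWord) : Good (p.toList.map toInt) := by
  refine ⟨?_, ?_, ?_⟩
  · intro x hx
    simp only [mem_map] at hx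
    obtain ⟨s, -, rfl⟩ := hx
    cases s <;> simp [toInt]
  · rw [count_one_map, count_negone_map]; exact p.count_U_eq_count_D
  · intro i
    rw [← map_take, count_one_map, count_negone_map]
    exact p.count_D_le_count_U i


lemma length_eq_count_add {l : List ℤ} (h : ∀ x ∈ l, x = 1 ∨ x = -1) :
    l.length = l.count 1 + l.count (-1) := by
  induction l with
  | nil => simp
  | cons a t ih =>
    have ht := ih fun x hx => h x (mem_cons_of_mem a hx)
    rcases h a (by simp) with rfl | rfl <;> simp [count_cons, ht] <;> omega

lemma ofFn_get_cast {m : ℕ} (w : List DyckStep) (h : 2*m = w.length) :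
    (List.ofFn fun i : Fin (2*m) => toInt (w.get (Fin.cast h i))) = w.map toInt := by
  apply List.ext_getElem
  · simp [← h]
  · intro i h1 h2
    simp

lemma coe_mem_pair {m : ℕ} (v : Fin (2*m) → ({-1, 1} : Finset ℤ)) (i : Fin (2*m)) :
    ((v i : ℤ) = 1) ∨ ((v i : ℤ) = -1) := by
  have := (v i).2
  simp only [Finset.mem_insert, Finset.mem_singleton] at this
  tauto

noncomputable def theEquiv (m : ℕ) :
    {v : Fin (2*m) → ({-1, 1} : Finset ℤ) // Annihilates (List.ofFn fun i => (v i : ℤ))} ≃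
      {p : DyckWord // p.semilength = m} where
  toFun vv := ⟨(good_of_annihilates vv.2).toDyck, by
    have hg := good_of_annihilates vv.2
    have h3 := length_eq_count_add hg.1
    have h4 := hg.2.1
    have hlen : (List.ofFn fun i => ((vv.1 i : ℤ))).length = 2 * m := by simp
    show ((List.ofFn fun i => ((vv.1 i : ℤ))).map toStep).count U = m
    rw [count_U_map]
    omega⟩
  invFun pp := ⟨fun i => ⟨toInt (pp.1.toList.get (Fin.cast (by
      rw [← pp.1.two_mul_semilength_eq_length, pp.2]) i)),
      by cases h : pp.1.toList.get _ <;> simp [h, toInt]⟩, by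
    rw [show (List.ofFn fun i => ((⟨toInt _, _⟩ : ({-1,1}:Finset ℤ)) : ℤ)) = _ from
      ofFn_get_cast pp.1.toList (by rw [← pp.1.two_mul_semilength_eq_length, pp.2])]
    exact annihilates_of_good _ (good_map_toInt pp.1)⟩
  left_inv vv := by
    apply Subtype.ext
    funext i
    apply Subtype.ext
    simp only [Good.toDyck, List.get_eq_getElem, List.getElem_map, List.getElem_ofFn,
      Fin.cast, Fin.eta]
    exact toInt_toStep (coe_mem_pair vv.1 _)
  right_inv pp := by
    apply Subtype.ext
    apply DyckWord.ext
    show (List.ofFn fun i => toInt (pp.1.toList.get _)).map toStep = pp.1.toList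
    rw [ofFn_get_cast pp.1.toList (by rw [← pp.1.two_mul_semilength_eq_length, pp.2]),
      map_map]
    simp [Function.comp_def]

open Classical in
theorem stmt_9 (m : ℕ) (hm : 1 ≤ m) :
    (Finset.univ.filter fun v : Fin (2*m) → ({-1, 1} : Finset ℤ) =>
        Annihilates (List.ofFn fun i => (v i : ℤ))).card = catalan m := by
  rw [← DyckWord.card_dyckWord_semilength_eq_catalan m, ← Fintype.card_congr (theEquiv m)]
  exact (Fintype.card_subtype _).symm
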